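/- Let ℓ be a prime and m ≥ 1 an integer, and let k = e₁ + e₂ℓ + ⋯ + e_mℓ^{m−1} where each e_i ∈ {0, 1}. Regard the field K = F_{ℓ^m} as a vector space over F_ℓ, and let the unit group K^× act F_ℓ-linearly on K by t · v = t^k·v. Suppose this action of K^× on K is irreducible, i.e., the only F_ℓ-subspaces of K stable under multiplication by t^k for all t ∈ K^× are 0 and K. Then for every subgroup S of K^× with index [K^× : S] < ℓ − 1, the restricted action of S on K is also irreducible: the only F_ℓ-subspaces of K stable under multiplication by s^k for all s ∈ S are 0 and K. -/

import Mathlib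

private lemma modEq_sum_aux {ι : Type*} (n : ℕ) : ∀ (s : Finset ι) (f g : ι → ℕ),
    (∀ i ∈ s, f i ≡ g i [MOD n]) → (∑ i ∈ s, f i) ≡ (∑ i ∈ s, g i) [MOD n] := by
  classical
  intro s
  induction s using Finset.induction_on with
  | empty => intro f g _; simp; rfl
  | @insert a s ha ih =>
    intro f g h
    rw [Finset.sum_insert ha, Finset.sum_insert ha]
    exact (h a (Finset.mem_insert_self a s)).add
      (ih f g fun i hi => h i (Finset.mem_insert_of_mem hi))

private lemma geom_aux (ℓ m : ℕ) (h : 1 ≤ ℓ) :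
    (∑ j ∈ Finset.range m, ℓ ^ j) * (ℓ - 1) = ℓ ^ m - 1 := by
  have hZ := geom_sum_mul (ℓ:ℤ) m
  have h1 : 1 ≤ ℓ ^ m := Nat.one_le_pow _ _ (by omega)
  zify [h, h1]
  rw [← hZ]

private lemma pow_mod_aux (ℓ m a : ℕ) (h : 1 ≤ ℓ) :
    ℓ ^ a ≡ ℓ ^ (a % m) [MOD ℓ ^ m - 1] := by
  conv_lhs => rw [← Nat.div_add_mod a m]
  rw [pow_add, pow_mul]
  have h1 : ℓ ^ m ≡ 1 [MOD ℓ ^ m - 1] :=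
    (Nat.modEq_iff_dvd' (Nat.one_le_pow _ _ (by omega))).mpr dvd_rfl |>.symm
  calc (ℓ ^ m) ^ (a / m) * ℓ ^ (a % m) ≡ 1 ^ (a/m) * ℓ ^ (a % m) [MOD ℓ ^ m - 1] :=
        Nat.ModEq.mul (h1.pow _) rfl
    _ = ℓ ^ (a % m) := by rw [one_pow, one_mul]

private lemma final_aux (N d c ℓ : ℕ) (hd : d ≠ 0) (hc : c ≠ 0) (hdvd : N ∣ d * c)
    (hbound : c * (ℓ - 1) ≤ N) (hdlt : d < ℓ - 1) : False := by
  have hcpos : 0 < c := Nat.pos_of_ne_zero hc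
  set G := Nat.gcd c N with hGdef
  have hN0 : 0 < N := by
    rcases Nat.eq_zero_or_pos N with h | h
    · rw [h] at hdvd
      have h2 : d * c = 0 := Nat.eq_zero_of_zero_dvd hdvd
      simp [Nat.mul_eq_zero, hd, hc] at h2
    · exact h
  have hG0 : 0 < G := Nat.gcd_pos_of_pos_left _ hcpos
  have hGc : G ∣ c := Nat.gcd_dvd_left _ _
  have hGN : G ∣ N := Nat.gcd_dvd_right _ _
  have h1 : N / G ∣ d * (c / G) := by
    obtain ⟨c1, hc1⟩ := hGc
    obtain ⟨N1, hN1⟩ := hGN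
    rw [hc1, hN1, Nat.mul_div_cancel_left _ hG0, Nat.mul_div_cancel_left _ hG0]
    rw [hc1, hN1] at hdvd
    rcases hdvd with ⟨t, ht⟩
    refine ⟨t, ?_⟩
    have : G * (N1 * t) = G * (d * c1) := by rw [← mul_assoc, ← ht]; ring
    exact (Nat.eq_of_mul_eq_mul_left hG0 this).symm ▸ rfl
  have hcop : Nat.Coprime (N / G) (c / G) := by
    have := Nat.coprime_div_gcd_div_gcd (m := c) (n := N) hG0
    exact this.symm
  have h2 : N / G ∣ d := (Nat.Coprime.dvd_of_dvd_mul_right hcop) h1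
  have h3 : N / G ≤ d := Nat.le_of_dvd (Nat.pos_of_ne_zero hd) h2
  have h4 : ℓ - 1 ≤ N / c := (Nat.le_div_iff_mul_le hcpos).mpr (by have := hbound; nlinarith [Nat.sub_le ℓ 1])
  have h5 : N / c ≤ N / G := Nat.div_le_div_left (Nat.le_of_dvd hcpos hGc) hG0
  omega

set_option maxHeartbeats 1000000 in
set_option synthInstance.maxHeartbeats 400000 in
/-- Let `ℓ` be a prime, `m ≥ 1`, and `k = e₁ + e₂ℓ + ⋯ + e_mℓ^{m−1}` with every `e_i ∈ {0,1}`.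
If the action of `K^×` on `K = F_{ℓ^m}` by `t · v = t^k v` is irreducible over `F_ℓ`, then for
every subgroup `S ≤ K^×` of index `< ℓ − 1`, the restricted action of `S` is irreducible. -/
theorem irreducible_of_small_index_subgroup (ℓ : ℕ) [Fact ℓ.Prime] (m : ℕ) (hm : 1 ≤ m)
    (e : Fin m → ℕ) (he : ∀ i, e i = 0 ∨ e i = 1)
    (k : ℕ) (hk : k = ∑ i : Fin m, e i * ℓ ^ (i : ℕ))
    (hirr : ∀ W : Submodule (ZMod ℓ) (GaloisField ℓ m),
      (∀ t : (GaloisField ℓ m)ˣ, ∀ v ∈ W, (t : GaloisField ℓ m) ^ k * v ∈ W) →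
      W = ⊥ ∨ W = ⊤)
    (S : Subgroup (GaloisField ℓ m)ˣ) (hS : S.index < ℓ - 1) :
    ∀ W : Submodule (ZMod ℓ) (GaloisField ℓ m),
      (∀ s ∈ S, ∀ v ∈ W, (s : GaloisField ℓ m) ^ k * v ∈ W) →
      W = ⊥ ∨ W = ⊤ := by
  classical
  intro W hW
  by_contra hcon
  push_neg at hcon
  obtain ⟨hWbot, hWtop⟩ := hcon
  set K := GaloisField ℓ m with hKdef
  have hp : Nat.Prime ℓ := Fact.out
  have hm0 : m ≠ 0 := by omega
  have hℓ2 : 2 ≤ ℓ := hp.two_le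
  have hd0 : S.index ≠ 0 := Subgroup.index_ne_zero_of_finite
  set d := S.index with hddef
  have hN1 : 1 ≤ ℓ ^ m := Nat.one_le_pow _ _ (by omega)
  have hcardK : Nat.card K = ℓ ^ m := GaloisField.card ℓ m hm0
  have hcardKu : Nat.card Kˣ = ℓ ^ m - 1 := by rw [Nat.card_units, hcardK]
  set N := ℓ ^ m - 1 with hNdef
  obtain ⟨g, hg⟩ := IsCyclic.exists_generator (α := Kˣ)
  have hordg : orderOf g = N := by
    rw [orderOf_eq_card_of_forall_mem_zpowers hg, hcardKu]
  -- the stabilizer subalgebra M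
  let M : Subalgebra (ZMod ℓ) K :=
    { carrier := {a : K | ∀ v ∈ W, a * v ∈ W}
      mul_mem' := by intro a b ha hb v hv; rw [mul_assoc]; exact ha _ (hb _ hv)
      one_mem' := by intro v hv; rw [one_mul]; exact hv
      add_mem' := by intro a b ha hb v hv; rw [add_mul]; exact W.add_mem (ha _ hv) (hb _ hv)
      zero_mem' := by intro v hv; rw [zero_mul]; exact W.zero_mem
      algebraMap_mem' := by intro c v hv; rw [← Algebra.smul_def]; exact W.smul_mem c hv }
  have hMmem : ∀ a : K, a ∈ M ↔ ∀ v ∈ W, a * v ∈ W := fun a => Iff.rfl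
  -- M is not everything
  have hMne : ∃ x : K, x ∉ M := by
    by_contra hall
    push_neg at hall
    rcases hirr W (fun t v hv => hall ((t : K) ^ k) v hv) with h | h
    exacts [hWbot h, hWtop h]
  obtain ⟨x₀, hx₀⟩ := hMne
  haveI : Fintype K := Fintype.ofFinite K
  haveI : Fintype M := Fintype.ofFinite M
  obtain ⟨r, hcardM⟩ := VectorSpace.card_fintype (ZMod ℓ) M
  rw [ZMod.card] at hcardM
  have hr1 : 1 ≤ r := by
    by_contra hr0
    have : r = 0 := by omega
    rw [this, pow_zero] at hcardM
    have h2 : Fintype.card M ≥ 2 := Fintype.one_lt_card_iff_nontrivial.mpr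
      ⟨⟨0, M.zero_mem⟩, ⟨1, M.one_mem⟩, by simp [Subtype.ext_iff]⟩
    omega
  have hrm : r < m := by
    have hlt : Fintype.card M < Fintype.card K :=
      Fintype.card_lt_of_injective_of_notMem ((↑) : M → K) Subtype.val_injective
        (by rintro ⟨⟨y, hy⟩, rfl⟩; exact hx₀ hy)
    rw [hcardM, ← Nat.card_eq_fintype_card, hcardK] at hlt
    exact (Nat.pow_lt_pow_iff_right (by omega)).mp hlt
  -- nonzero elements of M satisfy a ^ (ℓ^r - 1) = 1
  have hMpow : ∀ a : K, a ∈ M → a ≠ 0 → a ^ (ℓ ^ r - 1) = 1 := by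
    intro a ha h0
    letI : Field M := Fintype.fieldOfDomain M
    have hne : (⟨a, ha⟩ : M) ≠ 0 := by simp [Subtype.ext_iff, h0]
    have h1 := FiniteField.pow_card_sub_one_eq_one (⟨a, ha⟩ : M) hne
    rw [hcardM] at h1
    have h2 := congrArg (Subtype.val : M → K) h1
    push_cast at h2
    simpa using h2
  -- N divides d * k * (ℓ^r - 1)
  have hgd : (g : K) ^ (d * k) ∈ M := by
    have hds : g ^ d ∈ S := Subgroup.pow_index_mem S g
    have h2 : ((g ^ d : Kˣ) : K) ^ k ∈ M := fun v hv => hW _ hds v hv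
    rwa [Units.val_pow_eq_pow_val, ← pow_mul] at h2
  have hpow1 : (g : K) ^ (d * k * (ℓ ^ r - 1)) = 1 := by
    rw [pow_mul]
    exact hMpow _ hgd (pow_ne_zero _ (Units.ne_zero g))
  have hdvd : N ∣ d * k * (ℓ ^ r - 1) := by
    have h3 : g ^ (d * k * (ℓ ^ r - 1)) = 1 := Units.ext (by simpa using hpow1)
    rw [← hordg]
    exact orderOf_dvd_of_pow_eq_one h3
  -- the shifted exponent
  set k' : ℕ := ∑ i : Fin m, e i * ℓ ^ ((i + r) % m) with hk'def
  have hF1 : k * ℓ ^ r ≡ k' [MOD N] := by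
    rw [hk, Finset.sum_mul]
    apply modEq_sum_aux
    intro i _
    rw [mul_assoc, ← pow_add]
    exact Nat.ModEq.mul_left _ (pow_mod_aux ℓ m (i + r) (by omega))
  -- bounds
  have hgeom : (∑ j ∈ Finset.range m, ℓ ^ j) * (ℓ - 1) = N := geom_aux ℓ m (by omega)
  set Gm := ∑ j ∈ Finset.range m, ℓ ^ j with hGmdef
  have hkle : k ≤ Gm := by
    rw [hk, hGmdef, ← Fin.sum_univ_eq_sum_range (fun j => ℓ ^ j) m]
    apply Finset.sum_le_sum
    intro i _
    rcases he i with h | h <;> simp [h]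
  have hk'le : k' ≤ Gm := by
    have h1 : k' ≤ ∑ i : Fin m, ℓ ^ ((i + r) % m) := by
      apply Finset.sum_le_sum
      intro i _
      rcases he i with h | h <;> simp [h]
    have h2 : ∑ i : Fin m, ℓ ^ ((↑i + r) % m) = Gm := by
      rw [hGmdef, ← Fin.sum_univ_eq_sum_range (fun j => ℓ ^ j) m]
      haveI : NeZero m := ⟨hm0⟩
      apply Fintype.sum_bijective (fun i : Fin m => i + (Fin.ofNat m r))
        (Equiv.addRight (Fin.ofNat m r)).bijective
      intro i
      simp only [Fin.add_def, Fin.ofNat] 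
      congr 1
      simp [Nat.add_mod]
    omega
  by_cases hcase : k' ≡ k [MOD N]
  · -- Case A : build the Frobenius-fixed submodule
    have hkk : k * ℓ ^ r ≡ k [MOD N] := hF1.trans hcase
    let W' : Submodule (ZMod ℓ) K :=
      { carrier := {x : K | x ^ ℓ ^ r = x}
        add_mem' := by
          intro a b ha hb
          simp only [Set.mem_setOf_eq] at *
          rw [add_pow_char_pow, ha, hb]
        zero_mem' := by
          simp only [Set.mem_setOf_eq]
          exact zero_pow (by positivity)
        smul_mem' := by
          intro c x hx
          simp only [Set.mem_setOf_eq] at *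
          rw [smul_pow, hx, ZMod.pow_card_pow] }
    have hstab : ∀ t : Kˣ, ∀ v ∈ W', (t : K) ^ k * v ∈ W' := by
      intro t v hv
      have hv' : v ^ ℓ ^ r = v := hv
      have htk : t ^ (k * ℓ ^ r) = t ^ k := by
        rw [pow_eq_pow_iff_modEq]
        have hdt : orderOf t ∣ N := hcardKu ▸ orderOf_dvd_natCard t
        exact hkk.of_dvd hdt
      show ((t : K) ^ k * v) ^ ℓ ^ r = (t : K) ^ k * v
      rw [mul_pow, hv', ← pow_mul]
      congr 1
      calc (t : K) ^ (k * ℓ ^ r) = ((t ^ (k * ℓ ^ r) : Kˣ) : K) := by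
            rw [Units.val_pow_eq_pow_val]
        _ = ((t ^ k : Kˣ) : K) := by rw [htk]
        _ = (t : K) ^ k := Units.val_pow_eq_pow_val ..
    rcases hirr W' hstab with h | h
    · have h1 : (1 : K) ∈ W' := by
        show (1 : K) ^ ℓ ^ r = 1
        simp
      rw [h] at h1
      simp only [Submodule.mem_bot] at h1
      exact one_ne_zero h1
    · have hgW : (g : K) ∈ W' := h ▸ Submodule.mem_top
      have h2 : (g : K) ^ ℓ ^ r = (g : K) := hgW
      have h3 : g ^ ℓ ^ r = g ^ 1 := Units.ext (by simpa using h2)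
      have h4 := pow_eq_pow_iff_modEq.mp h3
      rw [hordg] at h4
      have h5 : N ∣ ℓ ^ r - 1 :=
        (Nat.modEq_iff_dvd' (Nat.one_le_pow _ _ (by omega))).mp h4.symm
      have h6 : 2 ≤ ℓ ^ r := by
        calc 2 ≤ ℓ := hℓ2
        _ = ℓ ^ 1 := (pow_one ℓ).symm
        _ ≤ ℓ ^ r := Nat.pow_le_pow_right (by omega) hr1
      have h7 := Nat.le_of_dvd (by omega) h5
      have h8 : ℓ ^ r < ℓ ^ m := Nat.pow_lt_pow_right (by omega) hrm
      omega
  · -- Case B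
    have hk'k : k' ≠ k := fun h => hcase (h ▸ Nat.ModEq.refl _)
    have hr0 : 1 ≤ ℓ ^ r := Nat.one_le_pow _ _ (by omega)
    -- pass to ℤ
    have hdvdZ : (N : ℤ) ∣ (d : ℤ) * k' - d * k := by
      have h1 : (N : ℤ) ∣ (d : ℤ) * k * ((ℓ : ℤ) ^ r - 1) := by
        have := Int.natCast_dvd_natCast.mpr hdvd
        push_cast [Nat.cast_sub hr0] at this
        convert this using 1
      have h2 : (N : ℤ) ∣ (k' : ℤ) - k * ℓ ^ r := by
        have := hF1.dvd
        exact_mod_cast this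
      have h3 : (N : ℤ) ∣ (d : ℤ) * ((k' : ℤ) - k * ℓ ^ r) := Dvd.dvd.mul_left h2 _
      have h4 : (d : ℤ) * k' - d * k =
          (d : ℤ) * k * ((ℓ : ℤ) ^ r - 1) + (d : ℤ) * ((k' : ℤ) - k * ℓ ^ r) := by ring
      rw [h4]
      exact dvd_add h1 h3
    have hbound : ∀ c : ℕ, c ≤ Gm → c * (ℓ - 1) ≤ N := by
      intro c hc
      calc c * (ℓ - 1) ≤ Gm * (ℓ - 1) := Nat.mul_le_mul_right _ hc
        _ = N := hgeom
    rcases le_total k k' with hle | hle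
    · have hdvdN : N ∣ d * (k' - k) := by
        have : ((d * (k' - k) : ℕ) : ℤ) = (d : ℤ) * k' - d * k := by
          push_cast [Nat.cast_sub hle]
          ring
        exact Int.natCast_dvd_natCast.mp (this ▸ hdvdZ)
      exact final_aux N d (k' - k) ℓ hd0 (by omega) hdvdN (hbound _ (by omega)) hS
    · have hdvdN : N ∣ d * (k - k') := by
        have : ((d * (k - k') : ℕ) : ℤ) = -((d : ℤ) * k' - d * k) := by
          push_cast [Nat.cast_sub hle]
          ring
        exact Int.natCast_dvd_natCast.mp (this ▸ hdvdZ.neg_right)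
      exact final_aux N d (k - k') ℓ hd0 (by omega) hdvdN (hbound _ (by omega)) hS
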